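/- For a spherical triangle with fixed side lengths a and b and variable included angle C, the area is maximized exactly when the third side equals the diameter of the circumscribed circle, and the maximal area satisfies |σ| ≤ 2 arctan(√((1−cos a)(1−cos b)/(2(cos a + cos b)))), assuming cos a + cos b > 0. -/

import Mathlib

open Real Set

private lemma sq_cancel' {u v : ℝ} (hu : 0 ≤ u) (hv : 0 ≤ v) (h : u ^ 2 = v ^ 2) : u = v := by
  have h2 : (u - v) * (u + v) = 0 := by linear_combination h
  rcases mul_eq_zero.mp h2 with h3 | h3
  · linarith
  · nlinarith

set_option maxHeartbeats 2000000 in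
/-- Among spherical triangles with fixed side lengths `a, b ∈ (0, π/2]` with
`cos a + cos b > 0` and variable included angle `C`, the area
`|σ| = A + B + C - π` satisfies
`|σ| ≤ 2 arctan √((1 - cos a)(1 - cos b) / (2 (cos a + cos b)))`,
with equality exactly when the third side `c` equals the diameter `2R` of the
circumscribed circle (where `tan R = 4 sin(a/2) sin(b/2) sin(c/2) / D`,
`D = sin a sin b sin C`). -/
theorem spherical_area_max_fixed_two_sides
    (a b : ℝ)
    (ha : a ∈ Ioc 0 (π / 2)) (hb : b ∈ Ioc 0 (π / 2))
    (hab : 0 < Real.cos a + Real.cos b)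
    (c A B C R : ℝ)
    (hc : c ∈ Ioo 0 π)
    (hA : A ∈ Ioo 0 π) (hB : B ∈ Ioo 0 π) (hC : C ∈ Ioo 0 π)
    (lawA : Real.cos a = Real.cos b * Real.cos c + Real.sin b * Real.sin c * Real.cos A)
    (lawB : Real.cos b = Real.cos a * Real.cos c + Real.sin a * Real.sin c * Real.cos B)
    (lawC : Real.cos c = Real.cos a * Real.cos b + Real.sin a * Real.sin b * Real.cos C)
    (hR : R ∈ Ioo 0 (π / 2))
    (htanR : Real.tan R =
      4 * Real.sin (a / 2) * Real.sin (b / 2) * Real.sin (c / 2) /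
        (Real.sin a * Real.sin b * Real.sin C)) :
    A + B + C - π ≤
      2 * Real.arctan
        (Real.sqrt ((1 - Real.cos a) * (1 - Real.cos b) / (2 * (Real.cos a + Real.cos b)))) ∧
    (A + B + C - π =
      2 * Real.arctan
        (Real.sqrt ((1 - Real.cos a) * (1 - Real.cos b) / (2 * (Real.cos a + Real.cos b)))) ↔
      c = 2 * R) := by
  obtain ⟨ha0, ha2⟩ := ha
  obtain ⟨hb0, hb2⟩ := hb
  obtain ⟨hc0, hc2⟩ := hc
  obtain ⟨hA0, hA2⟩ := hA
  obtain ⟨hB0, hB2⟩ := hB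
  obtain ⟨hC0, hC2⟩ := hC
  obtain ⟨hR0, hR2⟩ := hR
  have hpi := Real.pi_pos
  have hsa : 0 < Real.sin a := Real.sin_pos_of_pos_of_lt_pi ha0 (by linarith)
  have hsb : 0 < Real.sin b := Real.sin_pos_of_pos_of_lt_pi hb0 (by linarith)
  have hsc : 0 < Real.sin c := Real.sin_pos_of_pos_of_lt_pi hc0 hc2
  have hs : 0 < Real.sin C := Real.sin_pos_of_pos_of_lt_pi hC0 hC2
  have hsA0 : 0 < Real.sin A := Real.sin_pos_of_pos_of_lt_pi hA0 hA2
  have hsB0 : 0 < Real.sin B := Real.sin_pos_of_pos_of_lt_pi hB0 hB2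
  have hx0 : 0 ≤ Real.cos a := Real.cos_nonneg_of_mem_Icc ⟨by linarith, ha2⟩
  have hy0 : 0 ≤ Real.cos b := Real.cos_nonneg_of_mem_Icc ⟨by linarith, hb2⟩
  have hx1 : Real.cos a < 1 := by
    have h := Real.strictAntiOn_cos (show (0:ℝ) ∈ Icc 0 π from ⟨le_refl _, hpi.le⟩)
      (show a ∈ Icc 0 π from ⟨ha0.le, by linarith⟩) ha0
    simpa using h
  have hy1 : Real.cos b < 1 := by
    have h := Real.strictAntiOn_cos (show (0:ℝ) ∈ Icc 0 π from ⟨le_refl _, hpi.le⟩)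
      (show b ∈ Icc 0 π from ⟨hb0.le, by linarith⟩) hb0
    simpa using h
  have ht1 : -1 < Real.cos c := by
    have h := Real.strictAntiOn_cos (show c ∈ Icc 0 π from ⟨hc0.le, hc2.le⟩)
      (show π ∈ Icc 0 π from ⟨hpi.le, le_refl _⟩) hc2
    simpa using h
  have ht2 : Real.cos c < 1 := by
    have h := Real.strictAntiOn_cos (show (0:ℝ) ∈ Icc 0 π from ⟨le_refl _, hpi.le⟩)
      (show c ∈ Icc 0 π from ⟨hc0.le, hc2.le⟩) hc0
    simpa using h
  have hkC1 : -1 < Real.cos C := by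
    have h := Real.strictAntiOn_cos (show C ∈ Icc 0 π from ⟨hC0.le, hC2.le⟩)
      (show π ∈ Icc 0 π from ⟨hpi.le, le_refl _⟩) hC2
    simpa using h
  have hkC2 : Real.cos C < 1 := by
    have h := Real.strictAntiOn_cos (show (0:ℝ) ∈ Icc 0 π from ⟨le_refl _, hpi.le⟩)
      (show C ∈ Icc 0 π from ⟨hC0.le, hC2.le⟩) hC0
    simpa using h
  have h1t : 0 < 1 + Real.cos c := by linarith
  have h1t' : 0 < 1 - Real.cos c := by linarith
  have h1x : 0 < 1 + Real.cos a := by linarith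
  have h1y : 0 < 1 + Real.cos b := by linarith
  have h1x' : 0 < 1 - Real.cos a := by linarith
  have h1y' : 0 < 1 - Real.cos b := by linarith
  have hS : 0 < Real.cos a + Real.cos b := hab
  have hsig : 0 < Real.sin a * Real.sin b := mul_pos hsa hsb
  have hsa2 : Real.sin a ^ 2 = 1 - Real.cos a ^ 2 := Real.sin_sq a
  have hsb2 : Real.sin b ^ 2 = 1 - Real.cos b ^ 2 := Real.sin_sq b
  have hsc2 : Real.sin c ^ 2 = 1 - Real.cos c ^ 2 := Real.sin_sq c
  have hs2 : Real.sin C ^ 2 = 1 - Real.cos C ^ 2 := Real.sin_sq C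
  have hsqA : Real.sin A ^ 2 = 1 - Real.cos A ^ 2 := Real.sin_sq A
  have hsqB : Real.sin B ^ 2 = 1 - Real.cos B ^ 2 := Real.sin_sq B
  have hk5 : Real.sin a * Real.sin b * Real.cos C = Real.cos c - Real.cos a * Real.cos b := by
    linear_combination -lawC
  have hcA2 : Real.sin b * Real.sin c * Real.cos A = Real.cos a - Real.cos b * Real.cos c := by
    linear_combination -lawA
  have hcB2 : Real.sin a * Real.sin c * Real.cos B = Real.cos b - Real.cos a * Real.cos c := by
    linear_combination -lawB
  -- law of sines
  have hsA4 : Real.sin c * Real.sin A = Real.sin a * Real.sin C := by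
    have hsq : (Real.sin b * Real.sin c * Real.sin A) ^ 2
        = (Real.sin b * Real.sin a * Real.sin C) ^ 2 := by
      linear_combination (Real.sin b ^ 2 * Real.sin c ^ 2) * hsqA + ((-1) * Real.sin b * Real.sin c * Real.cos A + Real.cos b * Real.cos c + (-1) * Real.cos a) * hcA2 + ((-1) * Real.sin a ^ 2 * Real.sin b ^ 2) * hs2 + (- ((-1) * Real.cos C * Real.sin a * Real.sin b + (-1) * Real.cos c + Real.cos a * Real.cos b)) * hk5 + ((-1) * Real.sin b ^ 2) * hsa2 + ((-1) + Real.sin c ^ 2 + Real.cos a ^ 2) * hsb2 + (1 + (-1) * Real.cos b ^ 2) * hsc2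
    have h := sq_cancel' (by positivity) (by positivity) hsq
    have h2 : Real.sin b * (Real.sin c * Real.sin A) = Real.sin b * (Real.sin a * Real.sin C) := by
      linear_combination h
    exact mul_left_cancel₀ hsb.ne' h2
  have hsB4 : Real.sin c * Real.sin B = Real.sin b * Real.sin C := by
    have hsq : (Real.sin a * Real.sin c * Real.sin B) ^ 2
        = (Real.sin a * Real.sin b * Real.sin C) ^ 2 := by
      linear_combination (Real.sin a ^ 2 * Real.sin c ^ 2) * hsqB + ((-1) * Real.sin a * Real.sin c * Real.cos B + (-1) * Real.cos b + Real.cos a * Real.cos c) * hcB2 + ((-1) * Real.sin a ^ 2 * Real.sin b ^ 2) * hs2 + (- ((-1) * Real.cos C * Real.sin a * Real.sin b + (-1) * Real.cos c + Real.cos a * Real.cos b)) * hk5 + (Real.sin c ^ 2 + (-1) * Real.sin b ^ 2) * hsa2 + ((-1) + Real.cos a ^ 2) * hsb2 + (1 + (-1) * Real.cos a ^ 2) * hsc2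
    have h := sq_cancel' (by positivity) (by positivity) hsq
    have h2 : Real.sin a * (Real.sin c * Real.sin B) = Real.sin a * (Real.sin b * Real.sin C) := by
      linear_combination h
    exact mul_left_cancel₀ hsa.ne' h2
  -- sine and cosine of A+B
  have hmul1 : (Real.sin a * Real.sin b) ^ 2 * Real.sin c ^ 2 * Real.sin (A + B)
      = (Real.sin a * Real.sin b) ^ 2 * (1 - Real.cos c)
        * (Real.sin C * (Real.cos a + Real.cos b)) := by
    rw [Real.sin_add]
    linear_combination (Real.sin a ^ 2 * Real.sin b ^ 2 * Real.sin c * Real.cos B) * hsA4 + (Real.sin a ^ 2 * Real.sin b ^ 2 * Real.sin c * Real.cos A) * hsB4 + (Real.sin a ^ 2 * Real.sin b ^ 2 * Real.sin C) * hcA2 + (Real.sin a ^ 2 * Real.sin b ^ 2 * Real.sin C) * hcB2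
  have hsinAB : Real.sin (A + B)
      = Real.sin C * (Real.cos a + Real.cos b) / (1 + Real.cos c) := by
    rw [eq_div_iff h1t.ne']
    have h2 : ((Real.sin a * Real.sin b) ^ 2 * (1 - Real.cos c))
        * (Real.sin (A + B) * (1 + Real.cos c))
        = ((Real.sin a * Real.sin b) ^ 2 * (1 - Real.cos c))
          * (Real.sin C * (Real.cos a + Real.cos b)) := by
      linear_combination hmul1 - (Real.sin a * Real.sin b) ^ 2 * Real.sin (A + B) * hsc2
    exact mul_left_cancel₀ (mul_pos (pow_pos hsig 2) h1t').ne' h2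
  have hmul2 : (Real.sin a * Real.sin b) ^ 2 * Real.sin c ^ 2 * Real.cos (A + B)
      = Real.sin a * Real.sin b * (1 - Real.cos c)
        * ((Real.cos a + Real.cos b) ^ 2
            - (1 + Real.cos c) * (1 + Real.cos a * Real.cos b)) := by
    rw [Real.cos_add]
    linear_combination (Real.sin a ^ 2 * Real.sin b * Real.sin c * Real.cos B) * hcA2 + ((-1) * Real.cos b * Real.cos c * Real.sin a * Real.sin b + Real.cos a * Real.sin a * Real.sin b) * hcB2 + ((-1) * Real.sin a ^ 2 * Real.sin b ^ 2 * Real.sin c * Real.sin B) * hsA4 + ((-1) * Real.sin a ^ 3 * Real.sin b ^ 2 * Real.sin C) * hsB4 + ((-1) * Real.sin a ^ 3 * Real.sin b ^ 3) * hs2 + (- ((-1) * Real.cos C * Real.sin a ^ 2 * Real.sin b ^ 2 + (-1) * Real.cos c * Real.sin a * Real.sin b + Real.cos a * Real.cos b * Real.sin a * Real.sin b)) * hk5 + ((-1) * Real.sin a * Real.sin b ^ 3) * hsa2 + ((-1) * Real.sin a * Real.sin b + Real.cos a ^ 2 * Real.sin a * Real.sin b) * hsb2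
  have hcosAB : Real.cos (A + B)
      = ((Real.cos a + Real.cos b) ^ 2 - (1 + Real.cos c) * (1 + Real.cos a * Real.cos b))
        / (Real.sin a * Real.sin b * (1 + Real.cos c)) := by
    rw [eq_div_iff (mul_pos hsig h1t).ne']
    have h2 : (Real.sin a * Real.sin b * (1 - Real.cos c))
        * (Real.cos (A + B) * (Real.sin a * Real.sin b * (1 + Real.cos c)))
        = (Real.sin a * Real.sin b * (1 - Real.cos c))
          * ((Real.cos a + Real.cos b) ^ 2
              - (1 + Real.cos c) * (1 + Real.cos a * Real.cos b)) := by
      linear_combination hmul2 - (Real.sin a * Real.sin b) ^ 2 * Real.cos (A + B) * hsc2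
    exact mul_left_cancel₀ (mul_pos hsig h1t').ne' h2
  have hsplit : Real.cos (A + B + C - π)
      = Real.sin (A + B) * Real.sin C - Real.cos (A + B) * Real.cos C := by
    rw [Real.cos_sub_pi, Real.cos_add]
    ring
  have hcosE : Real.cos (A + B + C - π) * (Real.sin a * Real.sin b * (1 + Real.cos c))
      = Real.sin C ^ 2 * (Real.cos a + Real.cos b) * (Real.sin a * Real.sin b)
        - Real.cos C * ((Real.cos a + Real.cos b) ^ 2
            - (1 + Real.cos c) * (1 + Real.cos a * Real.cos b)) := by
    rw [hsplit, hsinAB, hcosAB]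
    field_simp
  -- the bound M
  set vq : ℝ := Real.sqrt ((1 - Real.cos a) * (1 - Real.cos b) / (2 * (Real.cos a + Real.cos b)))
    with hvq
  have hQ0 : 0 ≤ (1 - Real.cos a) * (1 - Real.cos b) / (2 * (Real.cos a + Real.cos b)) := by
    apply div_nonneg (mul_nonneg h1x'.le h1y'.le)
    linarith
  have hv2 : vq ^ 2 = (1 - Real.cos a) * (1 - Real.cos b) / (2 * (Real.cos a + Real.cos b)) := by
    rw [hvq]; exact Real.sq_sqrt hQ0
  have hv0 : 0 ≤ vq := by rw [hvq]; exact Real.sqrt_nonneg _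
  have hQ1 : (0:ℝ) < 1 + (1 - Real.cos a) * (1 - Real.cos b) / (2 * (Real.cos a + Real.cos b)) := by
    linarith
  have hMcos : Real.cos (2 * Real.arctan vq) * ((1 + Real.cos a) * (1 + Real.cos b))
      = 3 * (Real.cos a + Real.cos b) - 1 - Real.cos a * Real.cos b := by
    rw [Real.cos_two_mul, Real.cos_sq_arctan, hv2]
    field_simp
    ring
  -- the master difference identity
  have hDpos : 0 < (1 + Real.cos a) ^ 2 * (1 + Real.cos b) ^ 2 * (1 + Real.cos c) :=
    mul_pos (mul_pos (pow_pos h1x 2) (pow_pos h1y 2)) h1t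
  have hdiff : Real.cos (A + B + C - π) - Real.cos (2 * Real.arctan vq)
      = (1 - Real.cos a) * (1 - Real.cos b)
        * ((1 + Real.cos a) * (1 + Real.cos b) * Real.cos C + Real.sin a * Real.sin b) ^ 2
        / ((1 + Real.cos a) ^ 2 * (1 + Real.cos b) ^ 2 * (1 + Real.cos c)) := by
    rw [eq_div_iff hDpos.ne']
    have h2 : (Real.sin a * Real.sin b)
        * ((Real.cos (A + B + C - π) - Real.cos (2 * Real.arctan vq))
          * ((1 + Real.cos a) ^ 2 * (1 + Real.cos b) ^ 2 * (1 + Real.cos c)))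
        = (Real.sin a * Real.sin b)
          * ((1 - Real.cos a) * (1 - Real.cos b)
            * ((1 + Real.cos a) * (1 + Real.cos b) * Real.cos C
                + Real.sin a * Real.sin b) ^ 2) := by
      linear_combination ((1 + Real.cos a) ^ 2 * (1 + Real.cos b) ^ 2) * hcosE
        - (Real.sin a * Real.sin b * (1 + Real.cos c) * (1 + Real.cos a) * (1 + Real.cos b))
          * hMcos
        + (Real.cos b * Real.sin a * Real.sin b + 2 * Real.cos b ^ 2 * Real.sin a * Real.sin b + Real.cos b ^ 3 * Real.sin a * Real.sin b + Real.cos a * Real.sin a * Real.sin b + 4 * Real.cos a * Real.cos b * Real.sin a * Real.sin b + 5 * Real.cos a * Real.cos b ^ 2 * Real.sin a * Real.sin b + 2 * Real.cos a * Real.cos b ^ 3 * Real.sin a * Real.sin b + 2 * Real.cos a ^ 2 * Real.sin a * Real.sin b + 5 * Real.cos a ^ 2 * Real.cos b * Real.sin a * Real.sin b + 4 * Real.cos a ^ 2 * Real.cos b ^ 2 * Real.sin a * Real.sin b + Real.cos a ^ 2 * Real.cos b ^ 3 * Real.sin a * Real.sin b + Real.cos a ^ 3 * Real.sin a * Real.sin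 b + 2 * Real.cos a ^ 3 * Real.cos b * Real.sin a * Real.sin b + Real.cos a ^ 3 * Real.cos b ^ 2 * Real.sin a * Real.sin b) * hs2 + (- (Real.sin a * Real.sin b + Real.cos C + (-2) * Real.cos b * Real.sin a * Real.sin b + 2 * Real.cos b * Real.cos C + (-3) * Real.cos b ^ 2 * Real.sin a * Real.sin b + Real.cos b ^ 2 * Real.cos C + (-2) * Real.cos a * Real.sin a * Real.sin b + 2 * Real.cos a * Real.cos C + (-4) * Real.cos a * Real.cos b * Real.sin a * Real.sin b + 5 * Real.cos a * Real.cos b * Real.cos C + (-2) * Real.cos a * Real.cos b ^ 2 * Real.sin a * Real.sin b + 4 * Real.cos a * Real.cos b ^ 2 * Real.cos C + Real.cos a * Real.cos b ^ 3 * Real.cos C + (-3) * Real.cos a ^ 2 * Real.sin a * Real.sin b + Real.cos a ^ 2 * Real.cos C + (-2) * Real.cos a ^ 2 * Real.cos b * Real.sin a * Real.sin b + 4 * Real.cos a ^ 2 * Real.cos b * Real.cos C + Real.cos a ^ 2 * Real.cos b ^ 2 * Real.sin a * Real.sin b + 5 * Real.cos a ^ 2 * Real.cos b ^ 2 * Real.cos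 C + 2 * Real.cos a ^ 2 * Real.cos b ^ 3 * Real.cos C + Real.cos a ^ 3 * Real.cos b * Real.cos C + 2 * Real.cos a ^ 3 * Real.cos b ^ 2 * Real.cos C + Real.cos a ^ 3 * Real.cos b ^ 3 * Real.cos C)) * hk5 + ((-1) * Real.sin a * Real.sin b ^ 3 + (-1) * Real.cos C * Real.sin b ^ 2 + Real.cos b * Real.sin a * Real.sin b ^ 3 + (-2) * Real.cos b * Real.cos C * Real.sin b ^ 2 + (-1) * Real.cos b ^ 2 * Real.cos C * Real.sin b ^ 2 + Real.cos a * Real.sin a * Real.sin b ^ 3 + (-2) * Real.cos a * Real.cos C * Real.sin b ^ 2 + (-1) * Real.cos a * Real.cos b * Real.sin a * Real.sin b ^ 3 + (-4) * Real.cos a * Real.cos b * Real.cos C * Real.sin b ^ 2 + (-2) * Real.cos a * Real.cos b ^ 2 * Real.cos C * Real.sin b ^ 2 + (-1) * Real.cos a ^ 2 * Real.cos C * Real.sin b ^ 2 + (-2) * Real.cos a ^ 2 * Real.cos b * Real.cos C * Real.sin b ^ 2 + (-1) * Real.cos a ^ 2 * Real.cos b ^ 2 * Real.cos C * Real.sin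 b ^ 2) * hsa2 + ((-1) * Real.sin a * Real.sin b + (-1) * Real.cos C + Real.cos b * Real.sin a * Real.sin b + (-2) * Real.cos b * Real.cos C + (-1) * Real.cos b ^ 2 * Real.cos C + Real.cos a * Real.sin a * Real.sin b + (-2) * Real.cos a * Real.cos C + (-1) * Real.cos a * Real.cos b * Real.sin a * Real.sin b + (-4) * Real.cos a * Real.cos b * Real.cos C + (-2) * Real.cos a * Real.cos b ^ 2 * Real.cos C + Real.cos a ^ 2 * Real.sin a * Real.sin b + (-1) * Real.cos a ^ 2 * Real.cos b * Real.sin a * Real.sin b + (-1) * Real.cos a ^ 3 * Real.sin a * Real.sin b + 2 * Real.cos a ^ 3 * Real.cos C + Real.cos a ^ 3 * Real.cos b * Real.sin a * Real.sin b + 4 * Real.cos a ^ 3 * Real.cos b * Real.cos C + 2 * Real.cos a ^ 3 * Real.cos b ^ 2 * Real.cos C + Real.cos a ^ 4 * Real.cos C + 2 * Real.cos a ^ 4 * Real.cos b * Real.cos C + Real.cos a ^ 4 * Real.cos b ^ 2 * Real.cos C) * hsb2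
    exact mul_left_cancel₀ hsig.ne' h2
  -- the inequality between cosines
  have hcos_le : Real.cos (2 * Real.arctan vq) ≤ Real.cos (A + B + C - π) := by
    have hr0 : 0 ≤ (1 - Real.cos a) * (1 - Real.cos b)
        * ((1 + Real.cos a) * (1 + Real.cos b) * Real.cos C + Real.sin a * Real.sin b) ^ 2
        / ((1 + Real.cos a) ^ 2 * (1 + Real.cos b) ^ 2 * (1 + Real.cos c)) := by
      apply div_nonneg _ hDpos.le
      exact mul_nonneg (mul_nonneg h1x'.le h1y'.le) (sq_nonneg _)
    linarith [hdiff]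
  -- bounds on the excess
  have hsABpos : 0 < Real.sin (A + B) := by
    rw [hsinAB]; exact div_pos (mul_pos hs hS) h1t
  have hABpi : A + B < π := by
    by_contra hcon
    push_neg at hcon
    have h1 : 0 ≤ Real.sin (A + B - π) :=
      Real.sin_nonneg_of_nonneg_of_le_pi (by linarith) (by linarith)
    rw [Real.sin_sub_pi] at h1
    linarith
  have hABgt : π - C < A + B := by
    have hkey : (Real.cos a + Real.cos b) ^ 2
        - (1 + Real.cos c) * (1 + Real.cos a * Real.cos b)
        + Real.cos C * (Real.sin a * Real.sin b * (1 + Real.cos c))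
        = (Real.sin a * Real.sin b) ^ 2 * (Real.cos C ^ 2 - 1) := by
      linear_combination (- ((-1) + Real.cos C * Real.sin a * Real.sin b + (-1) * Real.cos a * Real.cos b)) * hk5 + (Real.sin b ^ 2) * hsa2 + (1 + (-1) * Real.cos a ^ 2) * hsb2
    have hknegk : Real.cos C ^ 2 - 1 < 0 := by
      have h9 : Real.cos C ^ 2 - 1 = -((1 - Real.cos C) * (1 + Real.cos C)) := by ring
      rw [h9]
      have h10 : 0 < (1 - Real.cos C) * (1 + Real.cos C) :=
        mul_pos (by linarith) (by linarith)
      linarith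
    have hneg : (Real.sin a * Real.sin b) ^ 2 * (Real.cos C ^ 2 - 1) < 0 :=
      mul_neg_of_pos_of_neg (pow_pos hsig 2) hknegk
    have hccc : Real.cos (A + B) < Real.cos (π - C) := by
      rw [Real.cos_pi_sub, hcosAB, div_lt_iff₀ (mul_pos hsig h1t)]
      clear hmul1 hmul2 hcosE hsinAB hcosAB hsplit hMcos hdiff hcos_le
      linarith [hkey, hneg]
    exact (Real.strictAntiOn_cos.lt_iff_gt
      (show A + B ∈ Icc 0 π from ⟨by linarith, hABpi.le⟩)
      (show π - C ∈ Icc 0 π from ⟨by linarith, by linarith⟩)).mp hccc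
  have hE0 : 0 < A + B + C - π := by linarith
  have hEpi : A + B + C - π < π := by linarith
  have hEmem : A + B + C - π ∈ Icc 0 π := ⟨hE0.le, hEpi.le⟩
  have harc0 : 0 ≤ Real.arctan vq := by
    have h := Real.arctan_strictMono.monotone hv0
    rwa [Real.arctan_zero] at h
  have harc2 : Real.arctan vq < π / 2 := Real.arctan_lt_pi_div_two _
  have hMmem : 2 * Real.arctan vq ∈ Icc 0 π := ⟨by linarith, by linarith⟩
  have hmain : A + B + C - π ≤ 2 * Real.arctan vq :=
    (Real.strictAntiOn_cos.le_iff_ge hMmem hEmem).mp hcos_le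
  refine ⟨hmain, ?_⟩
  -- equality case
  have hsa2p : 0 < Real.sin (a / 2) := Real.sin_pos_of_pos_of_lt_pi (by linarith) (by linarith)
  have hsb2p : 0 < Real.sin (b / 2) := Real.sin_pos_of_pos_of_lt_pi (by linarith) (by linarith)
  have hsc2p : 0 < Real.sin (c / 2) := Real.sin_pos_of_pos_of_lt_pi (by linarith) (by linarith)
  have hca2p : 0 < Real.cos (a / 2) := Real.cos_pos_of_mem_Ioo ⟨by linarith, by linarith⟩
  have hcb2p : 0 < Real.cos (b / 2) := Real.cos_pos_of_mem_Ioo ⟨by linarith, by linarith⟩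
  have hcc2p : 0 < Real.cos (c / 2) := Real.cos_pos_of_mem_Ioo ⟨by linarith, by linarith⟩
  have hsina : Real.sin a = 2 * Real.sin (a / 2) * Real.cos (a / 2) := by
    rw [← Real.sin_two_mul]; congr 1; ring
  have hsinb : Real.sin b = 2 * Real.sin (b / 2) * Real.cos (b / 2) := by
    rw [← Real.sin_two_mul]; congr 1; ring
  have hca2q : Real.cos (a / 2) ^ 2 = 1 / 2 + Real.cos a / 2 := by
    have h2 : 2 * (a / 2) = a := by ring
    rw [Real.cos_sq, h2]
  have hcb2q : Real.cos (b / 2) ^ 2 = 1 / 2 + Real.cos b / 2 := by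
    have h2 : 2 * (b / 2) = b := by ring
    rw [Real.cos_sq, h2]
  have hcc2q : Real.cos (c / 2) ^ 2 = 1 / 2 + Real.cos c / 2 := by
    have h2 : 2 * (c / 2) = c := by ring
    rw [Real.cos_sq, h2]
  have hhalf : ((1 + Real.cos a) * (1 + Real.cos b))
      * (4 * (Real.cos (c / 2) ^ 2
          - (Real.cos (a / 2) * Real.cos (b / 2) * Real.sin C) ^ 2))
      = ((1 + Real.cos a) * (1 + Real.cos b) * Real.cos C + Real.sin a * Real.sin b) ^ 2 := by
    rw [hcc2q]
    have hexp : (Real.cos (a / 2) * Real.cos (b / 2) * Real.sin C) ^ 2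
        = (1 / 2 + Real.cos a / 2) * ((1 / 2 + Real.cos b / 2) * Real.sin C ^ 2) := by
      rw [← hca2q, ← hcb2q]; ring
    rw [hexp]
    linear_combination ((-1) + (-2) * Real.cos b + (-1) * Real.cos b ^ 2 + (-2) * Real.cos a + (-4) * Real.cos a * Real.cos b + (-2) * Real.cos a * Real.cos b ^ 2 + (-1) * Real.cos a ^ 2 + (-2) * Real.cos a ^ 2 * Real.cos b + (-1) * Real.cos a ^ 2 * Real.cos b ^ 2) * hs2 + (- (2 + 2 * Real.cos b + 2 * Real.cos a + 2 * Real.cos a * Real.cos b)) * hk5 + ((-1) * Real.sin b ^ 2) * hsa2 + ((-1) + Real.cos a ^ 2) * hsb2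
  have step1 : (A + B + C - π = 2 * Real.arctan vq)
      ↔ Real.cos (A + B + C - π) = Real.cos (2 * Real.arctan vq) :=
    ⟨fun h => by rw [h], fun h => Real.injOn_cos hEmem hMmem h⟩
  have step2 : Real.cos (A + B + C - π) = Real.cos (2 * Real.arctan vq)
      ↔ (1 + Real.cos a) * (1 + Real.cos b) * Real.cos C + Real.sin a * Real.sin b = 0 := by
    constructor
    · intro h
      have h0 : (1 - Real.cos a) * (1 - Real.cos b)
          * ((1 + Real.cos a) * (1 + Real.cos b) * Real.cos C + Real.sin a * Real.sin b) ^ 2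
          / ((1 + Real.cos a) ^ 2 * (1 + Real.cos b) ^ 2 * (1 + Real.cos c)) = 0 := by
        rw [← hdiff, h, sub_self]
      have h3 := (div_eq_zero_iff.mp h0).resolve_right hDpos.ne'
      rcases mul_eq_zero.mp h3 with h4 | h4
      · exact absurd h4 (mul_pos h1x' h1y').ne'
      · exact pow_eq_zero_iff two_ne_zero |>.mp h4
    · intro h
      have h5 : Real.cos (A + B + C - π) - Real.cos (2 * Real.arctan vq) = 0 := by
        rw [hdiff, h]
        ring
      linarith
  have step3 : (1 + Real.cos a) * (1 + Real.cos b) * Real.cos C + Real.sin a * Real.sin b = 0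
      ↔ Real.cos (c / 2) = Real.cos (a / 2) * Real.cos (b / 2) * Real.sin C := by
    constructor
    · intro h
      have h6 : ((1 + Real.cos a) * (1 + Real.cos b))
          * (4 * (Real.cos (c / 2) ^ 2
              - (Real.cos (a / 2) * Real.cos (b / 2) * Real.sin C) ^ 2)) = 0 := by
        rw [hhalf, h]; ring
      have h7 := (mul_eq_zero.mp h6).resolve_left (mul_pos h1x h1y).ne'
      have h8 : Real.cos (c / 2) ^ 2
          = (Real.cos (a / 2) * Real.cos (b / 2) * Real.sin C) ^ 2 := by linarith
      exact sq_cancel' hcc2p.le (by positivity) h8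
    · intro h
      have h9 : ((1 + Real.cos a) * (1 + Real.cos b) * Real.cos C
          + Real.sin a * Real.sin b) ^ 2 = 0 := by
        rw [← hhalf, h]; ring
      exact pow_eq_zero_iff two_ne_zero |>.mp h9
  have h4pos : (0:ℝ) < 4 * Real.sin (a / 2) * Real.sin (b / 2) * Real.sin (c / 2) := by
    positivity
  have step4 : Real.cos (c / 2) = Real.cos (a / 2) * Real.cos (b / 2) * Real.sin C
      ↔ Real.tan (c / 2) = Real.tan R := by
    rw [htanR, Real.tan_eq_sin_div_cos,
      div_eq_div_iff hcc2p.ne' (mul_pos (mul_pos hsa hsb) hs).ne']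
    constructor
    · intro h
      linear_combination (Real.sin (c / 2) * Real.sin b * Real.sin C) * hsina
        + (2 * Real.sin (a / 2) * Real.cos (a / 2) * Real.sin (c / 2) * Real.sin C) * hsinb
        + (-(4 * Real.sin (a / 2) * Real.sin (b / 2) * Real.sin (c / 2))) * h
    · intro h
      have h2 : (4 * Real.sin (a / 2) * Real.sin (b / 2) * Real.sin (c / 2)) * Real.cos (c / 2)
          = (4 * Real.sin (a / 2) * Real.sin (b / 2) * Real.sin (c / 2))
            * (Real.cos (a / 2) * Real.cos (b / 2) * Real.sin C) := by
        linear_combination (-1 : ℝ) * h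
          + (Real.sin (c / 2) * Real.sin b * Real.sin C) * hsina
          + (2 * Real.sin (a / 2) * Real.cos (a / 2) * Real.sin (c / 2) * Real.sin C) * hsinb
      exact mul_left_cancel₀ h4pos.ne' h2
  have step5 : Real.tan (c / 2) = Real.tan R ↔ c = 2 * R := by
    constructor
    · intro h
      have h2 := Real.injOn_tan
        (show c / 2 ∈ Ioo (-(π / 2)) (π / 2) from ⟨by linarith, by linarith⟩)
        (show R ∈ Ioo (-(π / 2)) (π / 2) from ⟨by linarith, by linarith⟩) h
      linarith
    · intro h
      rw [h]
      congr 1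
      ring
  exact step1.trans (step2.trans (step3.trans (step4.trans step5)))
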